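/- The operator P₁ : Dom(P₁) ⊂ C₁(Ḡ) → C₁(Ḡ), defined by P₁u = Δu on Dom(P₁) = {u ∈ C₁(Ḡ) : Δu ∈ C₁(Ḡ)} (with Δu understood in the sense of distributions), admits a closure P̄₁ : Dom(P̄₁) ⊂ C₁(Ḡ) → C₁(Ḡ) as an unbounded operator in the Banach space C₁(Ḡ). -/

import Mathlib

open MeasureTheory Metric Set Filter Topology BoundedContinuousFunction

noncomputable section

/-- The plane `ℝ²`. -/
abbrev E2 := EuclideanSpace ℝ (Fin 2)

/-- The Laplacian of a function `φ : ℝ² → ℝ`. -/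
def lap (φ : E2 → ℝ) (x : E2) : ℝ :=
  ∑ i : Fin 2,
    fderiv ℝ (fun y => fderiv ℝ φ y (EuclideanSpace.single i 1)) x (EuclideanSpace.single i 1)

/-- `f` is the Laplacian of `u` on the open set `G` in the sense of distributions. -/
def IsDistLaplacianOn (G : Set E2) (u f : E2 → ℝ) : Prop :=
  ∀ φ : E2 → ℝ, ContDiff ℝ (⊤ : ℕ∞) φ → HasCompactSupport φ → tsupport φ ⊆ G →
    ∫ x in G, u x * lap φ x = ∫ x in G, f x * φ x

/-- Extension by zero (to the whole plane) of a function defined on `closure G`. -/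
def extendByZero (G : Set E2) (u : ↥(closure G) →ᵇ ℝ) : E2 → ℝ :=
  Function.extend Subtype.val (⇑u) 0

/-- `Γ` is a smooth (`C^∞`) regular simple curve. -/
def IsSmoothCurve (Γ : Set E2) : Prop :=
  ∃ γ : ℝ → E2, ContDiff ℝ (⊤ : ℕ∞) γ ∧ InjOn γ (Ioo 0 1) ∧
    (∀ t ∈ Ioo (0 : ℝ) 1, deriv γ t ≠ 0) ∧ γ '' Ioo 0 1 = Γ

/-- Near the point `g`, the region `G` coincides with a plane angle of opening `π`
(i.e. with a half-plane whose boundary line passes through `g`). -/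
def HasFlatAngleAt (G : Set E2) (g : E2) (ε : ℝ) : Prop :=
  ∃ ν : E2, ν ≠ 0 ∧ G ∩ ball g ε = {x | 0 < (inner ℝ ν (x - g) : ℝ)} ∩ ball g ε

/-- `Ω` is a smooth nondegenerate transformation (injective with everywhere
invertible differential) defined on a neighborhood of the curve `closure Γ`. -/
def IsSmoothNondegOn (Ω : E2 → E2) (Γ : Set E2) : Prop :=
  ∃ U : Set E2, IsOpen U ∧ closure Γ ⊆ U ∧ ContDiffOn ℝ (⊤ : ℕ∞) Ω U ∧
    InjOn Ω U ∧ ∀ y ∈ U, LinearMap.det ((fderiv ℝ Ω y) : E2 →ₗ[ℝ] E2) ≠ 0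

/-- `b ∈ C^∞(closure Γ)`: `b` is smooth on a neighborhood of `closure Γ`. -/
def IsSmoothOnCl (b : E2 → ℝ) (Γ : Set E2) : Prop :=
  ∃ U : Set E2, IsOpen U ∧ closure Γ ⊆ U ∧ ContDiffOn ℝ (⊤ : ℕ∞) b U

/-- The geometric data of Example 1: a bounded plane region `G` with smooth boundary
`∂G = Γ₁ ∪ Γ₂ ∪ {g₁, g₂}`, coinciding with a plane angle of opening `π` near `g₁, g₂`,
a coefficient `b₁ ∈ C^∞(closure Γ₁)` and a smooth nondegenerate transformation `Ω₁`
mapping `Γ₁` into `G`, equal near `g₁` to a rotation about `g₁` composed with a shift. -/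
structure Setting1 where
  /-- the region -/
  G : Set E2
  /-- the boundary arcs -/
  Γ₁ : Set E2
  Γ₂ : Set E2
  /-- the conjugation points, `𝒦 = {g₁, g₂}` -/
  g₁ : E2
  g₂ : E2
  ε : ℝ
  hG_open : IsOpen G
  hG_conn : IsConnected G
  hG_bdd : Bornology.IsBounded G
  hg_ne : g₁ ≠ g₂
  /-- `∂G = Γ₁ ∪ Γ₂ ∪ 𝒦` -/
  hbdry : frontier G = Γ₁ ∪ Γ₂ ∪ {g₁, g₂}
  /-- `Γ₁ ∩ Γ₂ = ∅` -/
  hΓ_disj : Γ₁ ∩ Γ₂ = ∅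
  hK_disj : ({g₁, g₂} : Set E2) ∩ (Γ₁ ∪ Γ₂) = ∅
  /-- `closure Γ₁ ∩ closure Γ₂ = 𝒦` -/
  hΓcl : closure Γ₁ ∩ closure Γ₂ = {g₁, g₂}
  /-- `Γ₁`, `Γ₂` are open in the topology of `∂G` -/
  hΓ₁_open : ∃ V : Set E2, IsOpen V ∧ Γ₁ = V ∩ frontier G
  hΓ₂_open : ∃ V : Set E2, IsOpen V ∧ Γ₂ = V ∩ frontier G
  hΓ₁_conn : IsConnected Γ₁
  hΓ₂_conn : IsConnected Γ₂
  hΓ₁_curve : IsSmoothCurve Γ₁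
  hΓ₂_curve : IsSmoothCurve Γ₂
  hε : 0 < ε
  /-- `G` coincides with a plane angle of opening `π` near `g₁` and `g₂` -/
  hangle₁ : HasFlatAngleAt G g₁ ε
  hangle₂ : HasFlatAngleAt G g₂ ε
  /-- the coefficient in the nonlocal condition -/
  b₁ : E2 → ℝ
  /-- the transformation in the nonlocal condition -/
  Ω₁ : E2 → E2
  hb₁_smooth : IsSmoothOnCl b₁ Γ₁
  hb₁_range : ∀ y ∈ closure Γ₁, 0 ≤ b₁ y ∧ b₁ y ≤ 1
  /-- `b₁ = const > 0` on `𝒪_{ε/2}(g₁)` -/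
  hb₁_const : ∃ c : ℝ, 0 < c ∧ ∀ y ∈ closure Γ₁ ∩ ball g₁ (ε / 2), b₁ y = c
  /-- `b₁ = 0` outside `𝒪_ε(g₁)` -/
  hb₁_zero : ∀ y ∈ closure Γ₁, y ∉ ball g₁ ε → b₁ y = 0
  hΩ₁_nondeg : IsSmoothNondegOn Ω₁ Γ₁
  /-- `Ω₁(Γ₁) ⊆ G` -/
  hΩ₁_maps : Ω₁ '' Γ₁ ⊆ G
  /-- `Ω₁(g₁) ∈ G` -/
  hΩ₁_g₁ : Ω₁ g₁ ∈ G
  /-- on `𝒪_ε(g₁)`, `Ω₁` is the composition of a rotation about `g₁` and a shift -/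
  hΩ₁_rot : ∃ (R : E2 ≃ₗᵢ[ℝ] E2) (v : E2), R.toLinearEquiv.det = 1 ∧
    ∀ y ∈ ball g₁ ε, Ω₁ y = g₁ + v + R (y - g₁)
  -- inclusions (consequences of the above) needed to state the nonlocal conditions
  hΓ₁_sub : Γ₁ ⊆ closure G
  hΓ₂cl_sub : closure Γ₂ ⊆ closure G
  hΩ₁_sub : ∀ y ∈ Γ₁, Ω₁ y ∈ closure G

/-- The space `C₁(Ḡ)`: continuous functions `u` on `closure G` satisfying the nonlocal
conditions `u(y) - b₁(y) u(Ω₁(y)) = 0` for `y ∈ Γ₁` and `u(y) = 0` for `y ∈ closure Γ₂`. -/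
def Setting1.C1 (S : Setting1) : Set (↥(closure S.G) →ᵇ ℝ) :=
  {u | (∀ y, ∀ hy : y ∈ S.Γ₁,
          u ⟨y, S.hΓ₁_sub hy⟩ - S.b₁ y * u ⟨S.Ω₁ y, S.hΩ₁_sub y hy⟩ = 0) ∧
       (∀ y, ∀ hy : y ∈ closure S.Γ₂, u ⟨y, S.hΓ₂cl_sub hy⟩ = 0)}

/-- The graph of the operator `P₁ : Dom(P₁) ⊆ C₁(Ḡ) → C₁(Ḡ)`, `P₁ u = Δu` on
`Dom(P₁) = {u ∈ C₁(Ḡ) : Δu ∈ C₁(Ḡ)}`, the Laplacian taken in the sense of distributions. -/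
def Setting1.graphP (S : Setting1) :
    Set ((↥(closure S.G) →ᵇ ℝ) × (↥(closure S.G) →ᵇ ℝ)) :=
  {p | p.1 ∈ S.C1 ∧ p.2 ∈ S.C1 ∧
    IsDistLaplacianOn S.G (extendByZero S.G p.1) (extendByZero S.G p.2)}

/-! ### Auxiliary lemmas for the closability proof -/

section Aux

variable {G : Set E2}

lemma extendByZero_apply (u : ↥(closure G) →ᵇ ℝ) {x : E2} (hx : x ∈ closure G) :
    extendByZero G u x = u ⟨x, hx⟩ := by
  exact Subtype.val_injective.extend_apply (⇑u) 0 ⟨x, hx⟩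

lemma extendByZero_continuousOn (u : ↥(closure G) →ᵇ ℝ) :
    ContinuousOn (extendByZero G u) (closure G) := by
  rw [continuousOn_iff_continuous_restrict]
  have : (closure G).restrict (extendByZero G u) = ⇑u := by
    funext a
    simp [Set.restrict, extendByZero_apply u a.2]
  rw [show (closure G).domRestrict (extendByZero G u) = ⇑u from this]
  exact u.continuous

lemma extendByZero_aesm (hGo : IsOpen G) (u : ↥(closure G) →ᵇ ℝ) :
    AEStronglyMeasurable (extendByZero G u) (volume.restrict G) :=
  ((extendByZero_continuousOn u).mono subset_closure).aestronglyMeasurable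
    hGo.measurableSet

lemma extendByZero_norm_le (u : ↥(closure G) →ᵇ ℝ) (x : E2) :
    ‖extendByZero G u x‖ ≤ ‖u‖ := by
  by_cases hx : x ∈ closure G
  · rw [extendByZero_apply u hx]
    exact u.norm_coe_le_norm _
  · have : extendByZero G u x = 0 := by
      rw [extendByZero, Function.extend_apply']
      · rfl
      · rintro ⟨a, rfl⟩; exact hx a.2
    rw [this]; simp

lemma extendByZero_dist_le (u v : ↥(closure G) →ᵇ ℝ) {x : E2} (hx : x ∈ closure G) :
    ‖extendByZero G u x - extendByZero G v x‖ ≤ dist u v := by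
  rw [extendByZero_apply u hx, extendByZero_apply v hx, ← dist_eq_norm]
  exact BoundedContinuousFunction.dist_coe_le_dist _

lemma integrableOn_ext_mul (hGo : IsOpen G) (hGb : Bornology.IsBounded G)
    (u : ↥(closure G) →ᵇ ℝ) {ψ : E2 → ℝ} (hψc : Continuous ψ) {C : ℝ}
    (hC : ∀ x, ‖ψ x‖ ≤ C) :
    IntegrableOn (fun x => extendByZero G u x * ψ x) G := by
  refine ⟨(extendByZero_aesm hGo u).mul hψc.aestronglyMeasurable, ?_⟩
  apply HasFiniteIntegral.restrict_of_bounded (C := ‖u‖ * C) hGb.measure_lt_top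
  refine Eventually.of_forall fun x => ?_
  rw [norm_mul]
  exact mul_le_mul (extendByZero_norm_le u x) (hC x) (norm_nonneg _) (norm_nonneg _)

lemma tendsto_integral_ext (hGo : IsOpen G) (hGb : Bornology.IsBounded G)
    {ψ : E2 → ℝ} (hψc : Continuous ψ) {C : ℝ} (hC : ∀ x, ‖ψ x‖ ≤ C)
    {un : ℕ → (↥(closure G) →ᵇ ℝ)} {u : ↥(closure G) →ᵇ ℝ}
    (h : Tendsto un atTop (𝓝 u)) :
    Tendsto (fun n => ∫ x in G, extendByZero G (un n) x * ψ x) atTop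
      (𝓝 (∫ x in G, extendByZero G u x * ψ x)) := by
  have hdist : Tendsto (fun n => dist (un n) u) atTop (𝓝 0) :=
    tendsto_iff_dist_tendsto_zero.mp h
  rw [tendsto_iff_dist_tendsto_zero]
  have hbound : ∀ n, dist (∫ x in G, extendByZero G (un n) x * ψ x)
      (∫ x in G, extendByZero G u x * ψ x) ≤ dist (un n) u * C * (volume G).toReal := by
    intro n
    have i1 := integrableOn_ext_mul hGo hGb (un n) hψc hC
    have i2 := integrableOn_ext_mul hGo hGb u hψc hC
    rw [Real.dist_eq, ← integral_sub i1 i2]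
    have : |∫ x in G, (extendByZero G (un n) x * ψ x - extendByZero G u x * ψ x)|
        = ‖∫ x in G, (extendByZero G (un n) x * ψ x - extendByZero G u x * ψ x)‖ := rfl
    rw [this]
    apply norm_setIntegral_le_of_norm_le_const hGb.measure_lt_top
    · intro x hx
      have : extendByZero G (un n) x * ψ x - extendByZero G u x * ψ x
          = (extendByZero G (un n) x - extendByZero G u x) * ψ x := by ring
      rw [this, norm_mul]
      exact mul_le_mul (extendByZero_dist_le _ _ (subset_closure hx)) (hC x)
        (norm_nonneg _) dist_nonneg
  have hzero : Tendsto (fun n => dist (un n) u * C * (volume G).toReal) atTop (𝓝 0) := by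
    have := (hdist.mul_const C).mul_const ((volume G).toReal)
    simpa using this
  exact squeeze_zero (fun n => dist_nonneg) hbound hzero

lemma lap_inner_contDiff {φ : E2 → ℝ} (hφ : ContDiff ℝ (⊤ : ℕ∞) φ) (i : Fin 2) :
    ContDiff ℝ (⊤ : ℕ∞) (fun y => fderiv ℝ φ y (EuclideanSpace.single i 1)) := by
  have h1 : ContDiff ℝ (⊤ : ℕ∞) (fderiv ℝ φ) := hφ.fderiv_right (by exact_mod_cast le_top)
  exact (ContinuousLinearMap.apply ℝ ℝ (EuclideanSpace.single i 1)).contDiff.comp h1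

lemma lap_continuous {φ : E2 → ℝ} (hφ : ContDiff ℝ (⊤ : ℕ∞) φ) : Continuous (lap φ) := by
  apply continuous_finset_sum
  intro i _
  have h2 : Continuous (fderiv ℝ (fun y => fderiv ℝ φ y (EuclideanSpace.single i 1))) :=
    (lap_inner_contDiff hφ i).continuous_fderiv (by simp)
  exact (ContinuousLinearMap.apply ℝ ℝ (EuclideanSpace.single i 1)).continuous.comp h2

lemma lap_eq_zero_of_nmem_tsupport {φ : E2 → ℝ} {x : E2} (hx : x ∉ tsupport φ) :
    lap φ x = 0 := by
  have hU : IsOpen (tsupport φ)ᶜ := (isClosed_tsupport φ).isOpen_compl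
  have hf0 : ∀ i : Fin 2, ∀ y ∈ (tsupport φ)ᶜ,
      (fun y => fderiv ℝ φ y (EuclideanSpace.single i 1)) y = 0 := by
    intro i y hy
    have hev : φ =ᶠ[𝓝 y] (fun _ => (0 : ℝ)) := by
      filter_upwards [hU.mem_nhds hy] with z hz
      exact image_eq_zero_of_notMem_tsupport hz
    show fderiv ℝ φ y (EuclideanSpace.single i 1) = 0
    rw [hev.fderiv_eq, fderiv_const_apply]
    rfl
  apply Finset.sum_eq_zero
  intro i _
  have hev : (fun y => fderiv ℝ φ y (EuclideanSpace.single i 1)) =ᶠ[𝓝 x] (fun _ => (0 : ℝ)) := by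
    filter_upwards [hU.mem_nhds hx] with z hz
    exact hf0 i z hz
  rw [hev.fderiv_eq, fderiv_const_apply]
  rfl

lemma lap_hasCompactSupport {φ : E2 → ℝ} (hφc : HasCompactSupport φ) :
    HasCompactSupport (lap φ) := by
  apply hφc.mono'
  intro x hx
  by_contra hxt
  exact hx (lap_eq_zero_of_nmem_tsupport hxt)

/-- Fundamental lemma of the calculus of variations, positive case. -/
lemma not_pos_of_integral_eq_zero (hGo : IsOpen G) (hGb : Bornology.IsBounded G)
    {h : E2 → ℝ} (hc : ContinuousOn h G)
    (hint : ∀ φ : E2 → ℝ, ContDiff ℝ (⊤ : ℕ∞) φ → HasCompactSupport φ → tsupport φ ⊆ G →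
      ∫ x in G, h x * φ x = 0)
    {x₀ : E2} (hx₀ : x₀ ∈ G) (hpos : 0 < h x₀) : False := by
  have hca : ContinuousAt h x₀ := hc.continuousAt (hGo.mem_nhds hx₀)
  have hev : ∀ᶠ y in 𝓝 x₀, h x₀ / 2 < h y :=
    hca.eventually (eventually_gt_nhds (by linarith))
  obtain ⟨r, hr, hball⟩ := Metric.mem_nhds_iff.mp
    (Filter.inter_mem (hev.and (Eventually.of_forall fun _ => trivial)) (hGo.mem_nhds hx₀) :
      ({y | h x₀ / 2 < h y ∧ True} ∩ G) ∈ 𝓝 x₀)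
  set f : ContDiffBump x₀ := ⟨r / 4, r / 2, by linarith, by linarith⟩ with hf
  have hfrOut : f.rOut = r / 2 := rfl
  have htsupp : tsupport f ⊆ G := by
    rw [f.tsupport_eq, hfrOut]
    refine (closedBall_subset_ball (show r / 2 < r by linarith)).trans ?_
    intro y hy
    exact (hball hy).2
  have hzero := hint f f.contDiff f.hasCompactSupport htsupp
  -- pointwise bound on G
  have hpt : ∀ x ∈ G, h x₀ / 2 * f x ≤ h x * f x := by
    intro x hx
    by_cases hxb : x ∈ ball x₀ r
    · exact mul_le_mul_of_nonneg_right (le_of_lt (hball hxb).1.1) f.nonneg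
    · have : f x = 0 := by
        apply f.zero_of_le_dist
        rw [hfrOut]
        have : r ≤ dist x x₀ := not_lt.mp (fun hcon => hxb (mem_ball.mpr hcon))
        linarith
      rw [this, mul_zero, mul_zero]
  -- integrability of h * f on G
  obtain ⟨M, hM⟩ := (isCompact_closedBall x₀ (r / 2)).exists_bound_of_continuousOn
    (hc.mono (fun y hy => (hball ((closedBall_subset_ball (by linarith)) hy)).2))
  have hM0 : 0 ≤ M := le_trans (norm_nonneg _)
    (hM x₀ (mem_closedBall_self (by linarith)))
  have ihf : IntegrableOn (fun x => h x * f x) G := by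
    refine ⟨((hc.aestronglyMeasurable hGo.measurableSet).mul
      f.continuous.aestronglyMeasurable), ?_⟩
    apply HasFiniteIntegral.restrict_of_bounded (C := M) hGb.measure_lt_top
    refine Eventually.of_forall fun x => ?_
    by_cases hxb : x ∈ closedBall x₀ (r / 2)
    · rw [norm_mul]
      calc ‖h x‖ * ‖f x‖ ≤ M * 1 := by
            apply mul_le_mul (hM x hxb) ?_ (norm_nonneg _) hM0
            rw [Real.norm_eq_abs, abs_of_nonneg f.nonneg]
            exact f.le_one
        _ = M := mul_one M
    · have : f x = 0 := by
        apply f.zero_of_le_dist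
        rw [hfrOut]
        simpa [dist_comm] using (not_lt.mp (fun hcon => hxb (mem_closedBall.mpr hcon.le)))
      simp [this, hM0]
  have icf : IntegrableOn (fun x => h x₀ / 2 * f x) G :=
    (f.integrable.const_mul (h x₀ / 2)).integrableOn
  have hmono : ∫ x in G, h x₀ / 2 * f x ≤ ∫ x in G, h x * f x :=
    setIntegral_mono_on icf ihf hGo.measurableSet hpt
  have hGint : ∫ x in G, (f : E2 → ℝ) x = ∫ x, (f : E2 → ℝ) x := by
    apply setIntegral_eq_integral_of_forall_compl_eq_zero
    intro x hx
    apply f.zero_of_le_dist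
    rw [hfrOut]
    have hxb : x ∉ ball x₀ r := fun hcon => hx (hball hcon).2
    have : r ≤ dist x x₀ := not_lt.mp (fun hcon => hxb (mem_ball.mpr hcon))
    linarith
  have hposint : 0 < ∫ x in G, h x₀ / 2 * f x := by
    rw [integral_const_mul, hGint]
    exact mul_pos (by linarith) f.integral_pos
  rw [hzero] at hmono
  linarith

/-- Fundamental lemma of the calculus of variations. -/
lemma eq_zero_of_integral_eq_zero (hGo : IsOpen G) (hGb : Bornology.IsBounded G)
    {h : E2 → ℝ} (hc : ContinuousOn h G)
    (hint : ∀ φ : E2 → ℝ, ContDiff ℝ (⊤ : ℕ∞) φ → HasCompactSupport φ → tsupport φ ⊆ G →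
      ∫ x in G, h x * φ x = 0) :
    ∀ x ∈ G, h x = 0 := by
  intro x hx
  by_contra hne
  rcases lt_or_gt_of_ne hne with hlt | hgt
  · refine not_pos_of_integral_eq_zero hGo hGb (hc.neg) ?_ hx (by simpa using hlt)
    intro φ h1 h2 h3
    have := hint φ h1 h2 h3
    rw [← neg_eq_zero, ← integral_neg] at this
    simpa [neg_mul] using this
  · exact not_pos_of_integral_eq_zero hGo hGb hc hint hx hgt

lemma mem_closure_graphP_isDistLap (S : Setting1) {p : (↥(closure S.G) →ᵇ ℝ) × (↥(closure S.G) →ᵇ ℝ)}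
    (hp : p ∈ closure S.graphP) :
    IsDistLaplacianOn S.G (extendByZero S.G p.1) (extendByZero S.G p.2) := by
  obtain ⟨seq, hseq, hlim⟩ := mem_closure_iff_seq_limit.mp hp
  intro φ hφ hφc hφs
  have h1 : Tendsto (fun n => (seq n).1) atTop (𝓝 p.1) :=
    (continuous_fst.tendsto p).comp hlim
  have h2 : Tendsto (fun n => (seq n).2) atTop (𝓝 p.2) :=
    (continuous_snd.tendsto p).comp hlim
  obtain ⟨C1, hC1⟩ := hφc.exists_bound_of_continuous hφ.continuous
  have hlapc : Continuous (lap φ) := lap_continuous hφ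
  obtain ⟨C2, hC2⟩ := (lap_hasCompactSupport hφc).exists_bound_of_continuous hlapc
  have t1 := tendsto_integral_ext S.hG_open S.hG_bdd hlapc hC2 h1
  have t2 := tendsto_integral_ext S.hG_open S.hG_bdd hφ.continuous hC1 h2
  refine tendsto_nhds_unique (t1.congr fun n => ?_) t2
  exact (hseq n).2.2 φ hφ hφc hφs

end Aux

/-- The operator `P1 u = Δu` with domain `{u ∈ C1(Ḡ) : Δu ∈ C1(Ḡ)}` admits a closure
in the Banach space `C1(Ḡ)`: the closure of its graph is again the graph of a
(single-valued) operator. -/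
theorem P1_admits_closure (S : Setting1) :
    ∀ p ∈ closure S.graphP, ∀ q ∈ closure S.graphP, p.1 = q.1 → p.2 = q.2 := by
  intro p hp q hq hpq
  have hP := mem_closure_graphP_isDistLap S hp
  have hQ := mem_closure_graphP_isDistLap S hq
  have key : ∀ x ∈ S.G, extendByZero S.G p.2 x - extendByZero S.G q.2 x = 0 := by
    apply eq_zero_of_integral_eq_zero S.hG_open S.hG_bdd
    · exact ((extendByZero_continuousOn p.2).mono subset_closure).sub
        ((extendByZero_continuousOn q.2).mono subset_closure)
    · intro φ h1 h2 h3
      have e1 := hP φ h1 h2 h3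
      have e2 := hQ φ h1 h2 h3
      rw [hpq] at e1
      have heq : ∫ x in S.G, extendByZero S.G p.2 x * φ x
          = ∫ x in S.G, extendByZero S.G q.2 x * φ x := e1.symm.trans e2
      obtain ⟨C1, hC1⟩ := h2.exists_bound_of_continuous h1.continuous
      have i1 := integrableOn_ext_mul S.hG_open S.hG_bdd p.2 h1.continuous hC1
      have i2 := integrableOn_ext_mul S.hG_open S.hG_bdd q.2 h1.continuous hC1
      have hsplit : ∫ x in S.G, (extendByZero S.G p.2 x - extendByZero S.G q.2 x) * φ x
          = (∫ x in S.G, extendByZero S.G p.2 x * φ x)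
            - ∫ x in S.G, extendByZero S.G q.2 x * φ x := by
        rw [← integral_sub i1 i2]
        congr 1
        funext x
        ring
      rw [hsplit, heq, sub_self]
  have hG2 : ∀ a : ↥(closure S.G), (a : E2) ∈ S.G → p.2 a = q.2 a := by
    intro a ha
    have hk := key a ha
    rw [extendByZero_apply p.2 a.2, extendByZero_apply q.2 a.2] at hk
    simpa [sub_eq_zero] using hk
  have : p.2 = q.2 := by
    ext a
    obtain ⟨x, hx⟩ := a
    obtain ⟨seq, hseqG, hseqlim⟩ := mem_closure_iff_seq_limit.mp hx
    have hta : Tendsto (fun n => (⟨seq n, subset_closure (hseqG n)⟩ : ↥(closure S.G)))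
        atTop (𝓝 ⟨x, hx⟩) := by
      rw [tendsto_subtype_rng]
      exact hseqlim
    have t1 : Tendsto (fun n => p.2 (⟨seq n, subset_closure (hseqG n)⟩ : ↥(closure S.G)))
        atTop (𝓝 (p.2 ⟨x, hx⟩)) := (p.2.continuous.tendsto _).comp hta
    have t2 : Tendsto (fun n => q.2 (⟨seq n, subset_closure (hseqG n)⟩ : ↥(closure S.G)))
        atTop (𝓝 (q.2 ⟨x, hx⟩)) := (q.2.continuous.tendsto _).comp hta
    exact tendsto_nhds_unique (t1.congr fun n => hG2 _ (hseqG n)) t2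
  exact this

end
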